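/- Let G^n, …, G^{N−1} be maps with G^k : R^{d_{k+1}} → R^{d_k} differentiable at the points s^{k+1}, and define targets recursively by t^N_β = s^N − β·g and t^k_β = s^k + G^k(t^{k+1}_β) − G^k(s^{k+1}). Then for each k, lim_{β→0} (t^k_β − s^k)/β = −(∏_{j=k}^{N−1} J_{G^j}) · g, where J_{G^j} is the Jacobian of G^j at s^{j+1} and the product is applied in order J_{G^k}·J_{G^{k+1}}·…·J_{G^{N−1}}. -/

import Mathlib

open Matrix Filter

/-- Difference target propagation recursion: with feedback maps `G^k` differentiable
at `s^{k+1}` with Jacobians `J_{G^k}`, and targets `t^N_β = s^N − β·g`,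
`t^k_β = s^k + G^k(t^{k+1}_β) − G^k(s^{k+1})`, for each `k ≤ N` we have
`lim_{β→0⁺} (t^k_β − s^k)/β = −(J_{G^k}·…·J_{G^{N−1}})·g`, where `P k` denotes
the ordered Jacobian product (`P N = 1`, `P k = J_{G^k}·P (k+1)`). -/
theorem dtp_recursion_linearization (N : ℕ) (d : ℕ → ℕ)
    (G : ∀ k : ℕ, (Fin (d (k + 1)) → ℝ) → (Fin (d k) → ℝ))
    (s : ∀ k : ℕ, Fin (d k) → ℝ) (g : Fin (d N) → ℝ)
    (JG : ∀ k : ℕ, Matrix (Fin (d k)) (Fin (d (k + 1))) ℝ)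
    (hG : ∀ k, k < N →
      HasFDerivAt (G k) (LinearMap.toContinuousLinearMap (JG k).mulVecLin) (s (k + 1)))
    (t : ∀ k : ℕ, ℝ → (Fin (d k) → ℝ))
    (htN : ∀ β : ℝ, t N β = s N - β • g)
    (htrec : ∀ k, k < N → ∀ β : ℝ, t k β = s k + G k (t (k + 1) β) - G k (s (k + 1)))
    (P : ∀ k : ℕ, Matrix (Fin (d k)) (Fin (d N)) ℝ)
    (hPN : P N = 1)
    (hPrec : ∀ k, k < N → P k = JG k * P (k + 1)) :
    ∀ k, k ≤ N →
      Tendsto (fun β : ℝ => β⁻¹ • (t k β - s k))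
        (nhdsWithin 0 (Set.Ioi 0)) (nhds (-(P k *ᵥ g))) := by
  -- t k 0 = s k for all k ≤ N
  have h0 : ∀ j, ∀ k, k ≤ N → N - k = j → t k 0 = s k := by
    intro j
    induction j with
    | zero =>
      intro k hk hj
      have : k = N := le_antisymm hk (by omega)
      subst this
      simp [htN]
    | succ j ih =>
      intro k hk hj
      have hkN : k < N := by omega
      have h1 : t (k + 1) 0 = s (k + 1) := ih (k + 1) (by omega) (by omega)
      rw [htrec k hkN, h1]
      abel
  have h0' : ∀ k, k ≤ N → t k 0 = s k := fun k hk => h0 (N - k) k hk rfl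
  -- main claim via HasDerivWithinAt
  have key : ∀ j, ∀ k, k ≤ N → N - k = j →
      HasDerivWithinAt (t k) (-(P k *ᵥ g)) (Set.Ioi 0) 0 := by
    intro j
    induction j with
    | zero =>
      intro k hk hj
      have : k = N := le_antisymm hk (by omega)
      subst this
      have : HasDerivAt (fun β : ℝ => s k - β • g) (-(P k *ᵥ g)) 0 := by
        have h := ((hasDerivAt_const (0:ℝ) (s k)).sub ((hasDerivAt_id (0:ℝ)).smul_const g))
        rw [hPN, Matrix.one_mulVec]
        rw [zero_sub, one_smul] at h
        exact h
      have := this.hasDerivWithinAt (s := Set.Ioi 0)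
      exact this.congr (fun β _ => htN β) (htN 0)
    | succ j ih =>
      intro k hk hj
      have hkN : k < N := by omega
      have hd : HasDerivWithinAt (t (k + 1)) (-(P (k + 1) *ᵥ g)) (Set.Ioi 0) 0 :=
        ih (k + 1) (by omega) (by omega)
      have h1 : t (k + 1) 0 = s (k + 1) := h0' (k + 1) (by omega)
      have hGk : HasFDerivAt (G k) (LinearMap.toContinuousLinearMap (JG k).mulVecLin)
          (t (k + 1) 0) := h1 ▸ hG k hkN
      have hcomp : HasDerivWithinAt (fun β => G k (t (k + 1) β))
          ((JG k).mulVecLin (-(P (k + 1) *ᵥ g))) (Set.Ioi 0) 0 :=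
        hGk.comp_hasDerivWithinAt 0 hd
      have hfun : HasDerivWithinAt (fun β => s k + G k (t (k + 1) β) - G k (s (k + 1)))
          ((JG k).mulVecLin (-(P (k + 1) *ᵥ g))) (Set.Ioi 0) 0 := by
        have h := ((hasDerivWithinAt_const (0:ℝ) (Set.Ioi 0) (s k)).add hcomp).sub
          (hasDerivWithinAt_const (0:ℝ) (Set.Ioi 0) (G k (s (k + 1))))
        rw [zero_add, sub_zero] at h
        exact h
      have hval : (JG k).mulVecLin (-(P (k + 1) *ᵥ g)) = -(P k *ᵥ g) := by
        rw [hPrec k hkN]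
        simp [Matrix.mulVecLin_apply, Matrix.mulVec_neg, Matrix.mulVec_mulVec]
      rw [hval] at hfun
      exact hfun.congr (fun β _ => htrec k hkN β) (htrec k hkN 0)
  intro k hk
  have hd := key (N - k) k hk rfl
  rw [hasDerivWithinAt_iff_tendsto_slope] at hd
  have hset : Set.Ioi (0:ℝ) \ {0} = Set.Ioi 0 := by
    apply Set.diff_singleton_eq_self; simp
  rw [hset] at hd
  refine hd.congr' ?_
  filter_upwards [self_mem_nhdsWithin] with β hβ
  simp [slope_def_module, h0' k hk]
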